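/- Let a, b > 0 with b² > 4a, let A = [[−b, a], [−1, 0]] ∈ ℝ^{2×2}, and set λ_± = (−b ± √(b²−4a))/2, so λ_− < λ_+ < 0. Define the response function Φ(t) = b · (exp(tA))_{11} (equivalently Φ(t) = (b, 0) exp(At) e₁ where e₁ = (1,0)^⊤). Then Φ(t) = (b/√(b²−4a)) (λ_+ e^{λ_+ t} − λ_− e^{λ_− t}) for all t ≥ 0, and ∫₀^∞ Φ(t) dt = 0. -/

import Mathlib

open MeasureTheory Matrix NormedSpace

private lemma exp_mul_integral_Ioi {l : ℝ} (hl : l < 0) :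
    ∫ t in Set.Ioi (0:ℝ), l * Real.exp (l * t) = -1 := by
  have hderiv : ∀ x ∈ Set.Ici (0:ℝ),
      HasDerivAt (fun t : ℝ => Real.exp (l * t)) (l * Real.exp (l * x)) x := by
    intro x _
    have h1 : HasDerivAt (fun t : ℝ => l * t) l x := by
      simpa using (hasDerivAt_id x).const_mul l
    have := (Real.hasDerivAt_exp (l * x)).comp x h1
    simpa [Function.comp_def, mul_comm] using this
  have hint : IntegrableOn (fun t : ℝ => l * Real.exp (l * t)) (Set.Ioi (0:ℝ)) := by
    have h0 : IntegrableOn (fun t : ℝ => Real.exp (-(-l) * t)) (Set.Ioi (0:ℝ)) :=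
      exp_neg_integrableOn_Ioi 0 (by linarith)
    have h0' : IntegrableOn (fun t : ℝ => Real.exp (l * t)) (Set.Ioi (0:ℝ)) := by
      simpa using h0
    exact h0'.const_mul l
  have htend : Filter.Tendsto (fun t : ℝ => Real.exp (l * t)) Filter.atTop (nhds 0) := by
    have h1 : Filter.Tendsto (fun t : ℝ => (-l) * t) Filter.atTop Filter.atTop :=
      Filter.Tendsto.const_mul_atTop (by linarith) Filter.tendsto_id
    have := Real.tendsto_exp_neg_atTop_nhds_zero.comp h1
    simpa [Function.comp_def] using this
  have := integral_Ioi_of_hasDerivAt_of_tendsto' hderiv hint htend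
  simpa using this

/-- **Response function of the linear adaptation model.**
For `a, b > 0` with `b² > 4a` and `A = [[−b, a], [−1, 0]]`, setting
`λ_± = (−b ± √(b²−4a))/2` one has `λ_− < λ_+ < 0`, the response function
`Φ(t) = b (e^{tA})_{11}` equals `(b/√(b²−4a))(λ_+ e^{λ_+t} − λ_− e^{λ_−t})` for all
`t ≥ 0`, and `∫₀^∞ Φ(t) dt = 0` (exact adaptation). -/
theorem adaptation_response_function (a b : ℝ) (ha : 0 < a) (hb : 0 < b)
    (hdisc : 4 * a < b ^ 2)
    (A : Matrix (Fin 2) (Fin 2) ℝ) (hA : A = !![-b, a; -1, 0])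
    (Φ : ℝ → ℝ) (hΦ : ∀ t, Φ t = b * NormedSpace.exp (t • A) 0 0)
    (lp lm : ℝ)
    (hlp : lp = (-b + Real.sqrt (b ^ 2 - 4 * a)) / 2)
    (hlm : lm = (-b - Real.sqrt (b ^ 2 - 4 * a)) / 2) :
    lm < lp ∧ lp < 0 ∧
    (∀ t : ℝ, 0 ≤ t →
      Φ t = b / Real.sqrt (b ^ 2 - 4 * a) *
        (lp * Real.exp (lp * t) - lm * Real.exp (lm * t))) ∧
    (∫ t in Set.Ici (0:ℝ), Φ t) = 0 := by
  set s := Real.sqrt (b ^ 2 - 4 * a) with hs_def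
  have hd : (0:ℝ) < b ^ 2 - 4 * a := by linarith
  have hs : 0 < s := Real.sqrt_pos.2 hd
  have hs2 : s ^ 2 = b ^ 2 - 4 * a := Real.sq_sqrt hd.le
  have hsb : s < b := by
    nlinarith [hs, hs2]
  have hlt : lm < lp := by rw [hlp, hlm]; linarith
  have hlp0 : lp < 0 := by rw [hlp]; linarith
  have hlm0 : lm < 0 := by linarith
  -- eigenvalue relations
  have hsum : lp + lm = -b := by rw [hlp, hlm]; ring
  have hdiff : lp - lm = s := by rw [hlp, hlm]; ring
  have hprod : lp * lm = a := by rw [hlp, hlm]; nlinarith [hs2]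
  -- diagonalization
  set D : Matrix (Fin 2) (Fin 2) ℝ := Matrix.diagonal ![lp, lm] with hD
  set P : Matrix (Fin 2) (Fin 2) ℝ := !![-lp, -lm; 1, 1] with hP
  have hdet : P.det = lm - lp := by simp [hP, Matrix.det_fin_two_of]; ring
  have hdet0 : P.det ≠ 0 := by rw [hdet]; linarith
  have hPunit : IsUnit P := (Matrix.isUnit_iff_isUnit_det P).2 (Ne.isUnit hdet0)
  have hAP : A * P = P * D := by
    ext i j
    fin_cases i <;> fin_cases j <;>
      simp [hA, hP, hD, Matrix.mul_apply, Fin.sum_univ_two, Matrix.diagonal] <;>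
      nlinarith [hsum, hprod]
  have hAeq : A = P * D * P⁻¹ := by
    have h1 : A * P * P⁻¹ = P * D * P⁻¹ := by rw [hAP]
    rwa [Matrix.mul_assoc, Matrix.mul_nonsing_inv P (Ne.isUnit hdet0), Matrix.mul_one] at h1
  -- inverse of P
  have hPinv : P⁻¹ = (lm - lp)⁻¹ • !![(1:ℝ), lm; -1, -lp] := by
    rw [Matrix.inv_def, hdet, Matrix.adjugate_fin_two, Ring.inverse_eq_inv']
    congr 1
    simp [hP]
  -- the key formula for the exponential entry
  have key : ∀ t : ℝ, NormedSpace.exp (t • A) 0 0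
      = (lp * Real.exp (lp * t) - lm * Real.exp (lm * t)) / s := by
    intro t
    have hsmul : t • A = P * (t • D) * P⁻¹ := by
      rw [hAeq, mul_smul_comm, smul_mul_assoc]
    have hexp : NormedSpace.exp (t • A) = P * NormedSpace.exp (t • D) * P⁻¹ := by
      rw [hsmul, Matrix.exp_conj P (t • D) hPunit]
    have htD : t • D = Matrix.diagonal ![t * lp, t * lm] := by
      ext i j
      fin_cases i <;> fin_cases j <;> simp [hD, Matrix.diagonal]
    have hexpD : NormedSpace.exp (t • D)
        = Matrix.diagonal ![Real.exp (t * lp), Real.exp (t * lm)] := by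
      rw [htD, Matrix.exp_diagonal, Pi.exp_def]
      have hfun : (fun i => NormedSpace.exp (![t * lp, t * lm] i))
          = ![Real.exp (t * lp), Real.exp (t * lm)] := by
        funext i
        fin_cases i <;> simp [Real.exp_eq_exp_ℝ]
      rw [hfun]
    rw [hexp, hexpD, hPinv]
    rw [Matrix.mul_smul]
    simp only [Matrix.smul_apply, Matrix.mul_apply, Fin.sum_univ_two]
    rw [show lm - lp = -s by linarith [hdiff]]
    simp [hP, Matrix.diagonal]
    rw [mul_comm t lp, mul_comm t lm]
    rw [div_eq_mul_inv]
    ring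
  have hΦ' : ∀ t : ℝ, Φ t = b / s * (lp * Real.exp (lp * t) - lm * Real.exp (lm * t)) := by
    intro t
    rw [hΦ, key]
    field_simp
  refine ⟨hlt, hlp0, fun t _ => hΦ' t, ?_⟩
  rw [MeasureTheory.integral_Ici_eq_integral_Ioi]
  have hip : ∫ t in Set.Ioi (0:ℝ), lp * Real.exp (lp * t) = -1 := exp_mul_integral_Ioi hlp0
  have him : ∫ t in Set.Ioi (0:ℝ), lm * Real.exp (lm * t) = -1 := exp_mul_integral_Ioi hlm0
  have hintp : IntegrableOn (fun t : ℝ => lp * Real.exp (lp * t)) (Set.Ioi (0:ℝ)) := by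
    have h0 : IntegrableOn (fun t : ℝ => Real.exp (-(-lp) * t)) (Set.Ioi (0:ℝ)) :=
      exp_neg_integrableOn_Ioi 0 (by linarith)
    have h0' : IntegrableOn (fun t : ℝ => Real.exp (lp * t)) (Set.Ioi (0:ℝ)) := by
      simpa using h0
    exact h0'.const_mul lp
  have hintm : IntegrableOn (fun t : ℝ => lm * Real.exp (lm * t)) (Set.Ioi (0:ℝ)) := by
    have h0 : IntegrableOn (fun t : ℝ => Real.exp (-(-lm) * t)) (Set.Ioi (0:ℝ)) :=
      exp_neg_integrableOn_Ioi 0 (by linarith)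
    have h0' : IntegrableOn (fun t : ℝ => Real.exp (lm * t)) (Set.Ioi (0:ℝ)) := by
      simpa using h0
    exact h0'.const_mul lm
  calc ∫ t in Set.Ioi (0:ℝ), Φ t
      = ∫ t in Set.Ioi (0:ℝ),
          b / s * (lp * Real.exp (lp * t) - lm * Real.exp (lm * t)) := by
        exact setIntegral_congr_fun measurableSet_Ioi fun t _ => hΦ' t
    _ = b / s * ∫ t in Set.Ioi (0:ℝ),
          (lp * Real.exp (lp * t) - lm * Real.exp (lm * t)) := by
        rw [integral_const_mul]
    _ = b / s * ((∫ t in Set.Ioi (0:ℝ), lp * Real.exp (lp * t))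
          - ∫ t in Set.Ioi (0:ℝ), lm * Real.exp (lm * t)) := by
        rw [integral_sub hintp hintm]
    _ = 0 := by rw [hip, him]; ring
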